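/- Let q = 3^m with m odd, d = 3^((m+1)/2) + 2, and F_q the finite field of order q. Then g(x) = (x^d - 1)/(x - 1) = 1 + x + ... + x^{d-1}, viewed as a function on F_q \ {1}, is 2-to-1: every nonempty fiber has exactly 2 elements. -/

import Mathlib

theorem stmt_13 (m : ℕ) (hm : 0 < m) (hodd : Odd m)
    (F : Type*) [Field F] [Fintype F] (hF : Fintype.card F = 3 ^ m)
    (d : ℕ) (hd : d = 3 ^ ((m + 1) / 2) + 2)
    (g : F → F) (hg : ∀ x : F, g x = ∑ i ∈ Finset.range d, x ^ i) :
    ∀ y : F, (∃ x : F, x ≠ 1 ∧ g x = y) →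
      Set.ncard {x : F | x ≠ 1 ∧ g x = y} = 2 := by
  -- characteristic 3
  haveI : CharP F (ringChar F) := ringChar.charP F
  have hprime : (ringChar F).Prime := CharP.char_is_prime F (ringChar F)
  haveI : Fact (ringChar F).Prime := ⟨hprime⟩
  obtain ⟨n, -, hcard⟩ := FiniteField.card F (ringChar F)
  have hrc : ringChar F = 3 := by
    have h3 : ringChar F ∣ 3 ^ m := by
      rw [← hF, hcard]
      exact dvd_pow_self _ (by positivity)
    exact (Nat.prime_dvd_prime_iff_eq hprime (by norm_num)).mp
      (hprime.dvd_of_dvd_pow h3)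
  haveI hc3 : CharP F 3 := hrc ▸ ringChar.charP F
  haveI : Fact (Nat.Prime 3) := ⟨by norm_num⟩
  have hch : (3 : F) = 0 := CharP.cast_eq_zero F 3
  -- exponent bookkeeping
  set k := (m + 1) / 2 with hkdef
  have hk2 : m + 1 = 2 * k := by
    obtain ⟨j, hj⟩ := hodd; omega
  set s := 3 ^ k with hsdef
  have hds : d = s + 2 := hd
  have hs_odd : Odd s := Odd.pow (by decide)
  have hsd_odd : Odd (s + 2) := hs_odd.add_even even_two
  -- Frobenius-type tools
  have hadd : ∀ a b : F, (a + b) ^ s = a ^ s + b ^ s := by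
    intro a b; rw [hsdef]; exact add_pow_char_pow a b 3 k
  have hsub : ∀ a b : F, (a - b) ^ s = a ^ s - b ^ s := by
    intro a b; rw [hsdef]; exact sub_pow_char_pow (p := 3) a b k
  have hcube : ∀ a : F, (a ^ s) ^ s = a ^ 3 := by
    intro a
    have hkk : k + k = m + 1 := by omega
    have hcd : a ^ 3 ^ m = a := by rw [← hF]; exact FiniteField.pow_card a
    rw [← pow_mul, hsdef, ← pow_add, hkk, pow_succ, pow_mul, hcd]
  have hneg1 : (-1 : F) ≠ 1 := by
    intro h; exact one_ne_zero (α := F) (by linear_combination hch + h)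
  -- fiber characterization
  intro y hy
  obtain ⟨x₀, hx₀1, hgx₀⟩ := hy
  have hmem : ∀ x : F, x ≠ 1 → (g x = y ↔ x ^ (s + 2) = y * x - y + 1) := by
    intro x hx1
    have h1 : x - 1 ≠ 0 := sub_ne_zero.mpr hx1
    constructor
    · intro h
      have h2 : (∑ i ∈ Finset.range d, x ^ i) * (x - 1) = x ^ d - 1 := geom_sum_mul x d
      rw [← hg x, h] at h2
      rw [hds] at h2
      linear_combination -h2
    · intro h
      have h2 : (∑ i ∈ Finset.range d, x ^ i) * (x - 1) = x ^ d - 1 := geom_sum_mul x d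
      rw [hg x]
      apply mul_right_cancel₀ h1
      rw [h2, hds, h]; ring
  have hSset : {x : F | x ≠ 1 ∧ g x = y} = {x : F | x ≠ 1 ∧ x ^ (s + 2) = y * x - y + 1} := by
    ext x
    simp only [Set.mem_setOf_eq]
    exact ⟨fun ⟨h1, h2⟩ => ⟨h1, (hmem x h1).mp h2⟩, fun ⟨h1, h2⟩ => ⟨h1, (hmem x h1).mpr h2⟩⟩
  rw [hSset]
  have hx₀E : x₀ ^ (s + 2) = y * x₀ - y + 1 := (hmem x₀ hx₀1).mp hgx₀
  by_cases hy1 : y = 1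
  · -- fiber of 1 is {0, -1}
    subst hy1
    have hset : {x : F | x ≠ 1 ∧ x ^ (s + 2) = 1 * x - 1 + 1} = {0, -1} := by
      ext x
      simp only [Set.mem_setOf_eq, Set.mem_insert_iff, Set.mem_singleton_iff]
      constructor
      · rintro ⟨hx1, hxE⟩
        by_cases hx0 : x = 0
        · exact Or.inl hx0
        right
        have hxE' : x ^ (s + 1) * x = 1 * x := by
          rw [← pow_succ]; linear_combination hxE
        have h1 : x ^ (s + 1) = 1 := mul_right_cancel₀ hx0 hxE'
        have h2 : x ^ 3 * x ^ s = 1 := by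
          have := congrArg (fun a : F => a ^ s) h1
          simp only [one_pow] at this
          rw [pow_succ, mul_pow, hcube] at this
          exact this
        have h3 : x ^ s * x = 1 := by rw [← pow_succ]; exact h1
        have h4 : x ^ 3 = x := by
          apply mul_right_cancel₀ (pow_ne_zero s hx0)
          linear_combination h2 - h3
        have h5 : (x - 1) * (x + 1) * x = 0 := by linear_combination h4
        rcases mul_eq_zero.mp h5 with h6 | h6
        · rcases mul_eq_zero.mp h6 with h7 | h7
          · exact absurd (by linear_combination h7) hx1
          · linear_combination h7
        · exact absurd h6 hx0
      · rintro (rfl | rfl)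
        · refine ⟨fun h => one_ne_zero (α := F) h.symm, ?_⟩
          rw [zero_pow (by positivity)]; ring
        · refine ⟨hneg1, ?_⟩
          rw [Odd.neg_one_pow hsd_odd]; ring
    rw [hset, Set.ncard_pair (by simp : (0 : F) ≠ -1)]
  by_cases hy0 : y = 0
  · -- fiber of 0 is empty : contradiction with the witness
    exfalso
    subst hy0
    have hE1 : x₀ ^ (s + 2) = 1 := by linear_combination hx₀E
    have hx₀0 : x₀ ≠ 0 := by
      intro h; rw [h, zero_pow (by positivity)] at hE1
      exact one_ne_zero (α := F) hE1.symm
    have h3 : x₀ ^ s * x₀ ^ 2 = 1 := by rw [← pow_add]; exact hE1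
    have h2 : x₀ ^ 3 * (x₀ ^ s) ^ 2 = 1 := by
      have := congrArg (fun a : F => a ^ s) hE1
      simp only [one_pow] at this
      rw [pow_add, mul_pow, hcube, ← pow_mul, pow_mul'] at this
      exact this
    have h4 : x₀ ^ 4 = x₀ ^ 3 := by
      linear_combination (x₀ ^ 3 * (x₀ ^ s * x₀ ^ 2 + 1)) * h3 - x₀ ^ 4 * h2
    have h5 : x₀ ^ 3 * (x₀ - 1) = 0 := by linear_combination h4
    rcases mul_eq_zero.mp h5 with h6 | h6
    · exact pow_ne_zero 3 hx₀0 h6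
    · exact hx₀1 (by linear_combination h6)
  -- main case : y ∉ {0, 1}
  set z := y ^ s with hzdef
  set t := x₀ ^ s with htdef
  have hx₀0 : x₀ ≠ 0 := by
    intro h
    rw [h, zero_pow (by positivity)] at hx₀E
    exact hy1 (by linear_combination hx₀E)
  have hz0 : z ≠ 0 := pow_ne_zero s hy0
  have ht0 : t ≠ 0 := pow_ne_zero s hx₀0
  have hy20 : y ^ 2 ≠ 0 := pow_ne_zero 2 hy0
  clear_value z t
  have hyx : y ^ 2 * x₀ ≠ 0 := mul_ne_zero hy20 hx₀0
  have hE₀ : t * x₀ ^ 2 = y * x₀ - y + 1 := by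
    rw [htdef, ← pow_add]; exact hx₀E
  -- the sigma-twisted equation, for arbitrary fiber elements
  have hsigE : ∀ x : F, x ^ s * x ^ 2 = y * x - y + 1 →
      x ^ 3 * (x ^ s) ^ 2 = z * (x ^ s) - z + 1 := by
    intro x hEx
    have h1 : (x ^ s * x ^ 2) ^ s = (y * (x - 1) + 1) ^ s := by
      rw [hEx]; ring_nf
    rw [mul_pow, hcube, ← pow_mul, pow_mul'] at h1
    rw [hadd, one_pow, mul_pow, hsub, one_pow] at h1
    rw [hzdef]
    linear_combination h1
  have hσ₀ : x₀ ^ 3 * t ^ 2 = z * t - z + 1 := by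
    rw [htdef]; exact hsigE x₀ (by rw [← htdef]; exact hE₀)
  have hR₀ : x₀ * (y * x₀ - y + 1) ^ 2 = z * ((y * x₀ - y + 1) - x₀ ^ 2) + x₀ ^ 2 := by
    linear_combination (-(x₀ * (y * x₀ - y + 1) + x₀ ^ 3 * t - z)) * hE₀ + x₀ ^ 2 * hσ₀
  -- the quadratic vanishing on the fiber
  have hq₂ : ∀ x : F, x ≠ 1 → x ^ (s + 2) = y * x - y + 1 →
      y ^ 2 * x ^ 2 + (z - (y - 1) ^ 2) * x + z * (1 - y) = 0 := by
    intro x hx1 hxE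
    have hEx : x ^ s * x ^ 2 = y * x - y + 1 := by rw [← pow_add]; exact hxE
    have hσx := hsigE x hEx
    have hRx : x * (y * x - y + 1) ^ 2 = z * ((y * x - y + 1) - x ^ 2) + x ^ 2 := by
      linear_combination (-(x * (y * x - y + 1) + x ^ 3 * (x ^ s) - z)) * hEx + x ^ 2 * hσx
    have h2 : (x - 1) * (y ^ 2 * x ^ 2 + (z - (y - 1) ^ 2) * x + z * (1 - y)) = 0 := by
      linear_combination hRx
    exact (mul_eq_zero.mp h2).resolve_left (sub_ne_zero.mpr hx1)
  have hq₂x₀ := hq₂ x₀ hx₀1 hx₀E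
  -- nondegeneracy : A₀ ≠ x₀²
  have hAx : (y * x₀ - y + 1) - x₀ ^ 2 ≠ 0 := by
    intro h
    have h5 : x₀ ^ 5 = x₀ ^ 2 := by
      linear_combination hR₀ + (z - x₀ * ((y * x₀ - y + 1) + x₀ ^ 2)) * h
    have h31 : x₀ ^ 3 = 1 := by
      apply mul_left_cancel₀ (pow_ne_zero 2 hx₀0)
      linear_combination h5
    have h6 : (x₀ - 1) ^ 3 = 0 := by
      linear_combination h31 + (x₀ - x₀ ^ 2) * hch
    exact hx₀1 (by linear_combination (pow_eq_zero_iff (by norm_num)).mp h6)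
  -- the partner point
  set x₁ : F := z * (1 - y) * (y ^ 2 * x₀)⁻¹ with hx₁def
  clear_value x₁
  have hprod : y ^ 2 * x₀ * x₁ = z * (1 - y) := by
    rw [hx₁def]; field_simp
  have hstar : x₀ * ((1 - z) * (1 - y)) =
      z * (y * x₀ - y + 1) + y * (y * x₀ - y + 1) * x₀ := by
    apply mul_right_cancel₀ hAx
    linear_combination (x₀ - y + 1) * hR₀
  have hA0 : y * x₀ - y + 1 ≠ 0 := by
    rw [← hE₀]; exact mul_ne_zero ht0 (pow_ne_zero 2 hx₀0)
  have hzs : z ^ s = y ^ 3 := by rw [hzdef]; exact hcube y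
  have homys : (1 - y) ^ s = 1 - z := by rw [hsub, one_pow, ← hzdef]
  have hy2s : (y ^ 2) ^ s = z ^ 2 := by rw [← pow_mul, pow_mul', ← hzdef]
  have hx₁s : x₁ ^ s = y ^ 3 * (1 - z) * (z ^ 2 * t)⁻¹ := by
    rw [hx₁def, mul_pow, mul_pow, inv_pow, mul_pow, hzs, homys, hy2s, ← htdef]
  have hE₁ : x₁ ^ (s + 2) = y * x₁ - y + 1 := by
    rw [pow_add, hx₁s, hx₁def]
    field_simp
    apply mul_left_cancel₀ hx₀0
    linear_combination (1 - y) * hstar - (1 - y) * (z + y * x₀) * hE₀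
  have hzneg : y = -1 → z = -1 := by
    intro h; rw [hzdef, h]; exact Odd.neg_one_pow hs_odd
  -- x₁ ≠ 1
  have hx₁ne1 : x₁ ≠ 1 := by
    intro h
    have hc1 : y ^ 2 * x₀ = z * (1 - y) := by
      rw [← hprod, h, mul_one]
    have h4 : x₀ * (y ^ 2 * x₀ + (z - (y - 1) ^ 2) + y ^ 2) = 0 := by
      linear_combination hq₂x₀ + hc1
    have h5 : y ^ 2 * x₀ + (z - (y - 1) ^ 2) + y ^ 2 = 0 :=
      (mul_eq_zero.mp h4).resolve_left hx₀0
    have hv : (y + 1) * (z + 1) = 0 := by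
      linear_combination (-1 : F) * h5 + hc1 + (y + z) * hch
    have hym : y = -1 := by
      rcases mul_eq_zero.mp hv with h6 | h6
      · linear_combination h6
      · -- z = -1 forces y³ = -1 hence y = -1
        have hz1 : z = -1 := by linear_combination h6
        have hy3 : y ^ 3 = -1 := by
          have := hcube y
          rw [← hzdef, hz1, Odd.neg_one_pow hs_odd] at this
          linear_combination -this
        have h7 : (y + 1) ^ 3 = 0 := by
          linear_combination hy3 + (y ^ 2 + y) * hch
        linear_combination (pow_eq_zero_iff (by norm_num : (3:ℕ) ≠ 0)).mp h7
    have hz1 : z = -1 := hzneg hym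
    rw [hym, hz1] at hc1
    exact hx₀1 (by linear_combination hc1 - hch)
  -- x₁ ≠ x₀
  have hx₁nex₀ : x₁ ≠ x₀ := by
    intro h
    have hb1 : y ^ 2 * x₀ ^ 2 = z * (1 - y) := by
      rw [← hprod, h]; ring
    have h4' : ((z - (y - 1) ^ 2) - y ^ 2 * x₀) * x₀ = 0 := by
      linear_combination hq₂x₀ + hb1 + (-(y ^ 2 * x₀ ^ 2)) * hch
    have h4 : (z - (y - 1) ^ 2) - y ^ 2 * x₀ = 0 :=
      (mul_eq_zero.mp h4').resolve_right hx₀0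
    have hΔ : (z + y - 1) * (z + y ^ 3 - 1) = 0 := by
      linear_combination (z - (y - 1) ^ 2 + y ^ 2 * x₀) * h4 + y ^ 2 * hb1 +
        (y - y * z - 2 * y ^ 2 + y ^ 2 * z + y ^ 3) * hch
    have hy3 : y ^ 3 = y := by
      rcases mul_eq_zero.mp hΔ with h6 | h6
      · -- z = 1 - y
        have h1 : z = 1 - y := by linear_combination h6
        have h2 : z ^ s = 1 - z := by
          conv_lhs => rw [h1]
          rw [hsub, one_pow, ← hzdef]
        have h3 : z ^ s = y ^ 3 := by rw [hzdef]; exact hcube y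
        rw [h3] at h2
        linear_combination h2 - h1
      · -- z = 1 - y³
        have h1 : z = 1 - y ^ 3 := by linear_combination h6
        have h2 : z ^ s = 1 - (z) ^ 3 := by
          conv_lhs => rw [h1]
          rw [hsub, one_pow, ← pow_mul, pow_mul', ← hzdef]
        have h3 : z ^ s = y ^ 3 := by rw [hzdef]; exact hcube y
        rw [h3] at h2
        have hz3 : z ^ 3 = (1 - y ^ 3) ^ 3 := by rw [h1]
        have hy9 : y ^ 9 = y ^ 3 := by
          linear_combination -h2 + hz3 + (y ^ 6 - y ^ 3) * hch
        have hcub : (y ^ 3 - y) ^ 3 = 0 := by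
          linear_combination hy9 + (y ^ 5 - y ^ 7) * hch
        have := (pow_eq_zero_iff (by norm_num : (3:ℕ) ≠ 0)).mp hcub
        linear_combination this
    have hym : y = -1 := by
      have h7 : (y * (y - 1)) * (y + 1) = 0 := by linear_combination hy3
      rcases mul_eq_zero.mp h7 with h8 | h8
      · rcases mul_eq_zero.mp h8 with h9 | h9
        · exact absurd h9 hy0
        · exact absurd (by linear_combination h9) hy1
      · linear_combination h8
    have hz1 : z = -1 := hzneg hym
    rw [hym, hz1] at hb1
    have hx2 : x₀ ^ 2 = 1 := by linear_combination hb1 - hch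
    have h9 : (x₀ - 1) * (x₀ + 1) = 0 := by linear_combination hx2
    rcases mul_eq_zero.mp h9 with h10 | h10
    · exact hx₀1 (by linear_combination h10)
    · have hxm : x₀ = -1 := by linear_combination h10
      rw [hym, hxm] at hE₀
      have ht : t = 0 := by linear_combination hE₀ + hch
      exact ht0 ht
  -- the fiber is exactly {x₀, x₁}
  have hSet : {x : F | x ≠ 1 ∧ x ^ (s + 2) = y * x - y + 1} = {x₀, x₁} := by
    ext x
    simp only [Set.mem_setOf_eq, Set.mem_insert_iff, Set.mem_singleton_iff]
    constructor
    · rintro ⟨hx1, hxE⟩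
      by_cases hxx : x = x₀
      · exact Or.inl hxx
      right
      have hq₂x := hq₂ x hx1 hxE
      have h6' : (x - x₀) * (y ^ 2 * (x + x₀) + (z - (y - 1) ^ 2)) = 0 := by
        linear_combination hq₂x - hq₂x₀
      have h6 : y ^ 2 * (x + x₀) + (z - (y - 1) ^ 2) = 0 :=
        (mul_eq_zero.mp h6').resolve_left (sub_ne_zero.mpr hxx)
      have h8 : x₀ * (y ^ 2 * x₀ + (z - (y - 1) ^ 2) + y ^ 2 * x₁) = 0 := by
        linear_combination hq₂x₀ + hprod
      have h9 : y ^ 2 * x₀ + (z - (y - 1) ^ 2) + y ^ 2 * x₁ = 0 :=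
        (mul_eq_zero.mp h8).resolve_left hx₀0
      apply mul_left_cancel₀ hy20
      linear_combination h6 - h9
    · rintro (rfl | rfl)
      · exact ⟨hx₀1, hx₀E⟩
      · exact ⟨hx₁ne1, hE₁⟩
  rw [hSet, Set.ncard_pair (fun h => hx₁nex₀ h.symm)]
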